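/- On the tangent bundle TM of a Finsler manifold (M,F), the Nijenhuis tensor N_J of the natural almost complex structure J satisfies N_J(δ/δx^i, δ/δx^j) = −N_J(∂/∂y^i, ∂/∂y^j) = −R^k_{ij} ∂/∂y^k and N_J(δ/δx^i, ∂/∂y^j) = −R^k_{ij} δ/δx^k, where R^k_{ij} = δG_i^k/δx^j − δG_j^k/δx^i; consequently J is integrable if and only if the curvature of the nonlinear connection vanishes, i.e. M is flat. -/

import Mathlib

/-!
A local-coordinate framework for the geometry of the tangent bundle `TM` of an
`n`-dimensional Finsler manifold `(M, F)`, following the paper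
"A frame on tangent bundle of a Finsler manifold and the natural foliations".

All geometric objects are described through their components on a chart domain
`U` of `TM` (avoiding the zero section): a point `p : Pt n` is the pair of
coordinates `(x^i, y^i)`, and a vector field on `TM` is given by its
components in the natural frame `(∂/∂x^i, ∂/∂y^i)`.
-/

open scoped BigOperators

noncomputable section

namespace FinslerFoliations

/-- A point of the tangent bundle `TM` in local coordinates:
`p.1 = (x^i)` is the base point and `p.2 = (y^i)` is the fibre coordinate. -/
abbrev Pt (n : ℕ) : Type := (Fin n → ℝ) × (Fin n → ℝ)

/-- A (local) vector field on `TM`, given by its components in the natural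
frame: `(X p).1 i` is the coefficient of `∂/∂x^i` and `(X p).2 i` the one of
`∂/∂y^i`. -/
abbrev VF (n : ℕ) : Type := Pt n → Pt n

variable {n : ℕ}

/-- The coordinate vector `∂/∂x^i`. -/
def ex (i : Fin n) : Pt n := (Pi.single i 1, 0)

/-- The coordinate vector `∂/∂y^i`. -/
def ey (i : Fin n) : Pt n := (0, Pi.single i 1)

/-- Partial derivative of a scalar function in the constant direction `v`. -/
def pd (v : Pt n) (f : Pt n → ℝ) (p : Pt n) : ℝ := fderiv ℝ f p v

/-- Derivative of a scalar function along a vector field. -/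
def Dv (X : VF n) (f : Pt n → ℝ) (p : Pt n) : ℝ := fderiv ℝ f p (X p)

/-- The Lie bracket of two vector fields, in coordinates. -/
def lie (X Y : VF n) : VF n := fun p => fderiv ℝ Y p (X p) - fderiv ℝ X p (Y p)

/-- Local-coordinate data of an `n`-dimensional Finsler manifold `(M, F)` on a
chart domain `U ⊆ TM` avoiding the zero section: the fundamental function `F`
(smooth, positive and positively `1`-homogeneous in `y`), the fundamental
tensor `g_{ij} = ½ ∂²F²/∂y^i∂y^j` (symmetric and positive definite) with its
inverse `g^{ij}`, the spray coefficients
`G^i = (g^{ij}/4)(∂²F²/∂y^j∂x^k y^k − ∂F²/∂x^j)` and the nonlinear connection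
coefficients `G_i^j = ∂G^j/∂y^i`. -/
structure Chart (n : ℕ) : Type where
  /-- the chart domain in `TM` -/
  U : Set (Pt n)
  hUopen : IsOpen U
  hUslit : ∀ p ∈ U, p.2 ≠ 0
  /-- the fundamental function `F` -/
  F : Pt n → ℝ
  Fpos : ∀ p ∈ U, 0 < F p
  Fsmooth : ContDiffOn ℝ (⊤ : ℕ∞) F U
  Fhomog : ∀ p ∈ U, ∀ t : ℝ, 0 < t → (p.1, t • p.2) ∈ U →
    F (p.1, t • p.2) = t * F p
  /-- the fundamental tensor `g_{ij}` -/
  g : Fin n → Fin n → Pt n → ℝ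
  gdef : ∀ i j, ∀ p ∈ U,
    g i j p = (1/2) * pd (ey i) (pd (ey j) (fun q => F q ^ 2)) p
  gsmooth : ∀ i j, ContDiffOn ℝ (⊤ : ℕ∞) (g i j) U
  gsymm : ∀ i j, ∀ p ∈ U, g i j p = g j i p
  gposdef : ∀ p ∈ U, ∀ v : Fin n → ℝ, v ≠ 0 →
    0 < ∑ i, ∑ j, g i j p * v i * v j
  /-- the inverse `g^{ij}` of the fundamental tensor -/
  ginv : Fin n → Fin n → Pt n → ℝ
  hginv : ∀ i j, ∀ p ∈ U,
    (∑ k, g i k p * ginv k j p) = if i = j then (1:ℝ) else 0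
  /-- the spray coefficients `G^i` -/
  spray : Fin n → Pt n → ℝ
  spraydef : ∀ i, ∀ p ∈ U, spray i p = (1/4) * ∑ j, ginv i j p *
      ((∑ k, pd (ey j) (pd (ex k) (fun q => F q ^ 2)) p * p.2 k)
        - pd (ex j) (fun q => F q ^ 2) p)
  /-- the nonlinear connection coefficients `G_i^j` -/
  N : Fin n → Fin n → Pt n → ℝ
  Ndef : ∀ i j, ∀ p ∈ U, N i j p = pd (ey i) (spray j) p
  Nsmooth : ∀ i j, ContDiffOn ℝ (⊤ : ℕ∞) (N i j) U

variable (fc : Chart n)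

/-- the vertical frame field `∂/∂y^i`. -/
def dyv (i : Fin n) : VF n := fun _ => ey i

/-- the horizontal frame field `δ/δx^i = ∂/∂x^i − G_i^j ∂/∂y^j`. -/
def ddx (i : Fin n) : VF n := fun p => (Pi.single i 1, fun j => -(fc.N i j p))

/-- the vertical Liouville vector field `L = y^i ∂/∂y^i`. -/
def LV : VF n := fun p => ((0 : Fin n → ℝ), p.2)

/-- the horizontal Liouville vector field `ξ = y^i δ/δx^i`. -/
def XI : VF n := fun p => (p.2, fun j => -(∑ i, p.2 i * fc.N i j p))

/-- the dual coframe `δy^i = dy^i + G_j^i dx^j`, applied to a tangent vector. -/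
def dely (i : Fin n) (p : Pt n) (v : Pt n) : ℝ := v.2 i + ∑ j, fc.N j i p * v.1 j

/-- the Sasaki lifted metric `G = g_{ij} dx^i ⊗ dx^j + g_{ij} δy^i ⊗ δy^j`. -/
def Gs (p : Pt n) (v w : Pt n) : ℝ :=
  ∑ i, ∑ j, fc.g i j p * (v.1 i * w.1 j + dely fc i p v * dely fc j p w)

/-- the natural almost complex structure
`J = δ/δx^i ⊗ δy^i − ∂/∂y^i ⊗ dx^i`, as a pointwise endomorphism. -/
def Jm (p : Pt n) (v : Pt n) : Pt n :=
  (fun i => dely fc i p v,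
   fun k => -(∑ i, dely fc i p v * fc.N i k p) - v.1 k)

/-- `J` applied to a vector field. -/
def Jvf (X : VF n) : VF n := fun p => Jm fc p (X p)

/-- the curvature coefficients `R^k_{ij} = δG_i^k/δx^j − δG_j^k/δx^i` of the
nonlinear connection. -/
def Rc (i j k : Fin n) (p : Pt n) : ℝ :=
  Dv (ddx fc j) (fc.N i k) p - Dv (ddx fc i) (fc.N j k) p

/-- the Cartan tensor `g_{ijk} = ½ ∂g_{ij}/∂y^k`. -/
def Cartan (i j k : Fin n) (p : Pt n) : ℝ := (1/2) * pd (ey k) (fc.g i j) p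

/-- the vertical adapted frame field `∂̄/∂̄y^a = E_a^i ∂/∂y^i`. -/
def vb (E : Fin (n-1) → Fin n → Pt n → ℝ) (a : Fin (n-1)) : VF n :=
  fun p => ((0 : Fin n → ℝ), fun i => E a i p)

/-- the horizontal adapted frame field `δ̄/δ̄x^a = J(∂̄/∂̄y^a)`. -/
def hb (E : Fin (n-1) → Fin n → Pt n → ℝ) (a : Fin (n-1)) : VF n :=
  fun p => Jm fc p (vb E a p)

/-- `E` is the coefficient matrix of an adapted local frame
`∂̄/∂̄y^a = E_a^i ∂/∂y^i`, `a = 1, …, n−1`, of the distribution `V'TM` (the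
`G`-orthogonal complement of the vertical Liouville field `L` inside the
vertical distribution `VTM`): the coefficients are smooth, pointwise linearly
independent, and each `∂̄/∂̄y^a` is `G`-orthogonal to `L`. -/
def IsAdaptedFrame (E : Fin (n-1) → Fin n → Pt n → ℝ) : Prop :=
  (∀ a i, ContDiffOn ℝ (⊤ : ℕ∞) (E a i) fc.U) ∧
  (∀ p ∈ fc.U, LinearIndependent ℝ (fun a : Fin (n-1) => (fun i => E a i p))) ∧
  (∀ a, ∀ p ∈ fc.U, Gs fc p (vb E a p) (LV p) = 0)

/-- `g_{ab} = g_{ij} E_a^i E_b^j`, the components of the Sasaki metric in the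
adapted frame. -/
def gb (E : Fin (n-1) → Fin n → Pt n → ℝ) (p : Pt n) (a b : Fin (n-1)) : ℝ :=
  ∑ i, ∑ j, fc.g i j p * E a i p * E b j p

/-- the matrix `(g_{ab})`. -/
def gbMat (E : Fin (n-1) → Fin n → Pt n → ℝ) (p : Pt n) :
    Matrix (Fin (n-1)) (Fin (n-1)) ℝ :=
  Matrix.of fun a b => gb fc E p a b

/-- `(g^{ab})`, the inverse of the matrix `(g_{ab})`. -/
def gbInv (E : Fin (n-1) → Fin n → Pt n → ℝ) (p : Pt n) (a b : Fin (n-1)) : ℝ :=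
  (gbMat fc E p)⁻¹ a b

/-- `g_{abc} = ½ E_a^i E_b^j E_c^k g_{ijk}`, the Cartan tensor in the adapted
frame. -/
def CartanBar (E : Fin (n-1) → Fin n → Pt n → ℝ) (a b c : Fin (n-1))
    (p : Pt n) : ℝ :=
  (1/2) * ∑ i, ∑ j, ∑ k, E a i p * E b j p * E c k p * Cartan fc i j k p

/-- `R_{cab} = E_c^i E_a^j E_b^k R^h_{jk} g_{hi}`, the lowered curvature of the
nonlinear connection in the adapted frame. -/
def Rlow (E : Fin (n-1) → Fin n → Pt n → ℝ) (c a b : Fin (n-1)) (p : Pt n) : ℝ :=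
  ∑ i, ∑ j, ∑ k, ∑ h, E c i p * E a j p * E b k p * Rc fc j k h p * fc.g h i p

/-- `nab` is the Levi-Civita connection of the Sasaki metric `G` on the chart
domain, characterized by the Koszul formula
`2G(∇_X Y, Z) = X G(Y,Z) + Y G(X,Z) − Z G(X,Y)
  − G([X,Z],Y) − G([Y,Z],X) + G([X,Y],Z)`. -/
def IsLeviCivita (nab : VF n → VF n → VF n) : Prop :=
  ∀ X Y Z : VF n,
    ContDiffOn ℝ (⊤ : ℕ∞) X fc.U → ContDiffOn ℝ (⊤ : ℕ∞) Y fc.U →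
    ContDiffOn ℝ (⊤ : ℕ∞) Z fc.U → ∀ p ∈ fc.U,
    2 * Gs fc p (nab X Y p) (Z p) =
      Dv X (fun q => Gs fc q (Y q) (Z q)) p
      + Dv Y (fun q => Gs fc q (X q) (Z q)) p
      - Dv Z (fun q => Gs fc q (X q) (Y q)) p
      - Gs fc p (lie X Z p) (Y p)
      - Gs fc p (lie Y Z p) (X p)
      + Gs fc p (lie X Y p) (Z p)

/-- the `G`-orthogonal projection of a vector field onto the line spanned by
the vertical Liouville field `L` (the normal direction to the indicatrix). -/
def projL (X : VF n) : VF n :=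
  fun p => (Gs fc p (X p) (LV p) / Gs fc p (LV p) (LV p)) • LV p

/-- the curvature tensor `R(X,Y)Z = ∇_X ∇_Y Z − ∇_Y ∇_X Z − ∇_{[X,Y]} Z` of a
connection. -/
def curv (nab : VF n → VF n → VF n) (X Y Z : VF n) : VF n :=
  fun p => nab X (nab Y Z) p - nab Y (nab X Z) p - nab (lie X Y) Z p

/-- membership in `V'TM`: vertical and `G`-orthogonal to `L`. -/
def InV' (p v : Pt n) : Prop := v.1 = 0 ∧ Gs fc p v (LV p) = 0

/-- membership in `V^⊥TM`: `G`-orthogonal to `L`. -/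
def InVperp (p v : Pt n) : Prop := Gs fc p v (LV p) = 0

/-- membership in `HTM ⊕ ⟨L⟩`, the `G`-orthogonal complement of `V'TM`. -/
def InHL (p v : Pt n) : Prop := ∃ c : ℝ, ∀ i, dely fc i p v = c * p.2 i

/-- membership in the line spanned by the vertical Liouville field `L`. -/
def InL (p v : Pt n) : Prop := ∃ c : ℝ, v = c • LV p

/-- membership in the plane spanned by `L` and `ξ`. -/
def InLXi (p v : Pt n) : Prop := ∃ c d : ℝ, v = c • LV p + d • XI fc p

/-- membership in the `G`-orthogonal complement of `⟨L, ξ⟩`. -/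
def InLXiPerp (p v : Pt n) : Prop :=
  Gs fc p v (LV p) = 0 ∧ Gs fc p v (XI fc p) = 0

/-- the contact `1`-form `η = y^i g_{ij} dx^j` of the indicatrix bundle,
applied to a tangent vector. -/
def etaC (p : Pt n) (v : Pt n) : ℝ := ∑ i, ∑ j, p.2 i * fc.g i j p * v.1 j

/-- the `(1,1)`-tensor `φ` of the contact structure of the indicatrix bundle:
`φ = J` on the contact distribution `D` and `φ(ξ) = 0`; on tangent vectors of
`IM` it is given by `φ(v) = J v + η(v) L`. -/
def phiC (p : Pt n) (v : Pt n) : Pt n := Jm fc p v + etaC fc p v • LV p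

/-- `φ` applied to a vector field. -/
def phiVF (X : VF n) : VF n := fun p => phiC fc p (X p)

/-- `η` applied to a vector field, as a scalar function. -/
def etaVF (X : VF n) : Pt n → ℝ := fun p => etaC fc p (X p)

/-- the exterior derivative `dη(X,Y) = X(η(Y)) − Y(η(X)) − η([X,Y])`. -/
def dEta (X Y : VF n) (p : Pt n) : ℝ :=
  Dv X (etaVF fc Y) p - Dv Y (etaVF fc X) p - etaC fc p (lie X Y p)

/-- the normality tensor `N^{(1)} = [φ,φ] + 2 dη ⊗ ξ` of the contact structure
of the indicatrix bundle, evaluated on vector fields, where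
`[φ,φ](X,Y) = φ²[X,Y] + [φX,φY] − φ[φX,Y] − φ[X,φY]` is the Nijenhuis torsion
of `φ`. -/
def Ntensor (X Y : VF n) : VF n := fun p =>
  phiC fc p (phiC fc p (lie X Y p)) + lie (phiVF fc X) (phiVF fc Y) p
    - phiC fc p (lie (phiVF fc X) Y p) - phiC fc p (lie X (phiVF fc Y) p)
    + (2 * dEta fc X Y p) • XI fc p

/-- a vector field of `TM` is tangent to the indicatrix bundle
`IM = {F = 1}` (equivalently, `G`-orthogonal to the normal field `L` along
`IM`). -/
def TangentIM (X : VF n) : Prop :=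
  ∀ p ∈ fc.U, fc.F p = 1 → Gs fc p (X p) (LV p) = 0

/-- The indicatrix bundle `IM`, with its natural contact metric structure
`(φ, η, ξ, Ḡ)`, is a Sasakian manifold: the contact structure is normal, i.e.
the tensor `N^{(1)} = [φ,φ] + 2 dη ⊗ ξ` vanishes on vector fields tangent to
`IM`. -/
def IsSasakianIM : Prop :=
  ∀ X Y : VF n, ContDiffOn ℝ (⊤ : ℕ∞) X fc.U → ContDiffOn ℝ (⊤ : ℕ∞) Y fc.U →
    TangentIM fc X → TangentIM fc Y →
    ∀ p ∈ fc.U, fc.F p = 1 → Ntensor fc X Y p = 0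

/-- the Nijenhuis tensor of the natural almost complex structure `J`:
`N_J(X,Y) = [JX,JY] − J[JX,Y] − J[X,JY] + J²[X,Y]`, with `J² = −Id`. -/
def NijJ (X Y : VF n) : VF n := fun p =>
  lie (Jvf fc X) (Jvf fc Y) p - Jm fc p (lie (Jvf fc X) Y p)
    - Jm fc p (lie X (Jvf fc Y) p) - lie X Y p

/-- the almost complex structure `J̄` on `TM ≅ IM × ℝ` induced by the contact
structure `(φ, η, ξ)` of the indicatrix bundle via
`J̄(X + f L) = φ(X) − f ξ + η(X) L`, where `X` is tangent to `IM`;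
a tangent vector `v` is decomposed as `v = vᵀ + f L` with
`f = G(v,L)/G(L,L)` and `vᵀ` tangent to the indicatrix. -/
def Jbar (p : Pt n) (v : Pt n) : Pt n :=
  phiC fc p (v - (Gs fc p v (LV p) / Gs fc p (LV p) (LV p)) • LV p)
    - (Gs fc p v (LV p) / Gs fc p (LV p) (LV p)) • XI fc p
    + etaC fc p (v - (Gs fc p v (LV p) / Gs fc p (LV p) (LV p)) • LV p) • LV p


section Helpers

variable {n : ℕ} (fc : Chart n) {p : Pt n}

lemma sum_single_mul (i : Fin n) (c : Fin n → ℝ) :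
    ∑ m, (Pi.single i 1 : Fin n → ℝ) m * c m = c i := by
  simp [Pi.single_apply, ite_mul]

lemma sum_mul_single (i : Fin n) (c : Fin n → ℝ) :
    ∑ m, c m * (Pi.single i 1 : Fin n → ℝ) m = c i := by
  simp [Pi.single_apply, mul_ite]

lemma dely_ey (k i : Fin n) : dely fc k p (ey i) = (Pi.single i 1 : Fin n → ℝ) k := by
  simp [dely, ey]

lemma dely_ddx (k i : Fin n) : dely fc k p (ddx fc i p) = 0 := by
  simp [dely, ddx, sum_mul_single]

lemma Jm_ey (i : Fin n) : Jm fc p (ey i) = ddx fc i p := by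
  unfold Jm ddx
  ext k
  · simp [dely, ey]
  · simp [dely, ey, Pi.single_apply, ite_mul]

lemma Jm_ddx (i : Fin n) : Jm fc p (ddx fc i p) = -(ey i : Pt n) := by
  ext k
  · show dely fc k p (ddx fc i p) = _
    simp [dely_ddx, ey]
  · show -(∑ m, dely fc m p (ddx fc i p) * fc.N m k p) - (ddx fc i p).1 k = _
    simp only [dely_ddx]
    simp [ddx, ey]

lemma sum_mul_comm {m : ℕ} (a b : Fin m → ℝ) : ∑ i, a i * b i = ∑ i, b i * a i :=
  Finset.sum_congr rfl fun _ _ => mul_comm _ _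

lemma dely_Jm (i : Fin n) (v : Pt n) : dely fc i p (Jm fc p v) = -v.1 i := by
  unfold Jm dely
  have h : ∑ j, fc.N j i p * (v.2 j + ∑ m, fc.N m j p * v.1 m)
      = ∑ j, (v.2 j + ∑ m, fc.N m j p * v.1 m) * fc.N j i p :=
    Finset.sum_congr rfl fun _ _ => mul_comm _ _
  simp only []
  rw [h]; ring

lemma Jm_JJ (v : Pt n) : Jm fc p (Jm fc p v) = -v := by
  ext k
  · exact dely_Jm fc k v
  · show -(∑ m, dely fc m p (Jm fc p v) * fc.N m k p) - (Jm fc p v).1 k = -v.2 k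
    simp only [dely_Jm]
    show -(∑ m, -v.1 m * fc.N m k p) - dely fc k p v = -v.2 k
    unfold dely
    rw [show (∑ j, fc.N j k p * v.1 j) = ∑ j, v.1 j * fc.N j k p from sum_mul_comm _ _]
    simp only [neg_mul, Finset.sum_neg_distrib]
    ring

end Helpers

section Helpers2

variable {n : ℕ} (fc : Chart n) {p : Pt n}

lemma dely_add (k : Fin n) (v w : Pt n) :
    dely fc k p (v + w) = dely fc k p v + dely fc k p w := by
  unfold dely
  simp [mul_add, Finset.sum_add_distrib]
  ring

lemma dely_smul (k : Fin n) (c : ℝ) (v : Pt n) :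
    dely fc k p (c • v) = c * dely fc k p v := by
  unfold dely
  simp [Finset.mul_sum, mul_add, smul_eq_mul]
  rw [Finset.sum_congr rfl (fun j _ => show fc.N j k p * (c * v.1 j) = c * (fc.N j k p * v.1 j) by ring)]

lemma Jm_add (v w : Pt n) : Jm fc p (v + w) = Jm fc p v + Jm fc p w := by
  ext k
  · show dely fc k p (v + w) = _
    rw [dely_add]; rfl
  · show -(∑ m, dely fc m p (v + w) * fc.N m k p) - (v + w).1 k = _
    simp only [dely_add, add_mul, Finset.sum_add_distrib]
    show _ = -(∑ m, dely fc m p v * fc.N m k p) - v.1 k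
      + (-(∑ m, dely fc m p w * fc.N m k p) - w.1 k)
    have : (v + w).1 k = v.1 k + w.1 k := rfl
    rw [this]; ring

lemma Jm_smul (c : ℝ) (v : Pt n) : Jm fc p (c • v) = c • Jm fc p v := by
  ext k
  · show dely fc k p (c • v) = _
    rw [dely_smul]; rfl
  · show -(∑ m, dely fc m p (c • v) * fc.N m k p) - (c • v).1 k = _
    simp only [dely_smul]
    rw [Finset.sum_congr rfl (fun m _ =>
      show c * dely fc m p v * fc.N m k p = c * (dely fc m p v * fc.N m k p) by ring)]
    rw [← Finset.mul_sum]
    show _ = c * (-(∑ m, dely fc m p v * fc.N m k p) - v.1 k)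
    have : (c • v).1 k = c * v.1 k := rfl
    rw [this]; ring

lemma Jm_neg (v : Pt n) : Jm fc p (-v) = -Jm fc p v := by
  have h := Jm_smul fc (p := p) (-1) v
  simpa using h

lemma Jm_sub (v w : Pt n) : Jm fc p (v - w) = Jm fc p v - Jm fc p w := by
  rw [sub_eq_add_neg, Jm_add, Jm_neg, sub_eq_add_neg]

/-- derivative of the nonlinear connection coefficients in direction `h`. -/
def dN (fc : Chart n) (j k : Fin n) (p h : Pt n) : ℝ := fderiv ℝ (fc.N j k) p h

/-- the derivative of `J` (as a field of endomorphisms) at `p` in direction `h`,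
applied to the fixed vector `u`. -/
def DJf (fc : Chart n) (p h u : Pt n) : Pt n :=
  (fun k => ∑ j, dN fc j k p h * u.1 j,
   fun k => -(∑ i, ((∑ j, dN fc j i p h * u.1 j) * fc.N i k p
      + dely fc i p u * dN fc i k p h)))

/-- the value of the Nijenhuis tensor as a pointwise bilinear expression. -/
def Bfun (fc : Chart n) (p v w : Pt n) : Pt n :=
  DJf fc p (Jm fc p v) w - DJf fc p (Jm fc p w) v
    + Jm fc p (DJf fc p w v) - Jm fc p (DJf fc p v w)

lemma Bfun_skew (v w : Pt n) : Bfun fc p v w = -Bfun fc p w v := by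
  unfold Bfun; abel

lemma DJf_ey_right (h : Pt n) (j : Fin n) :
    DJf fc p h (ey j) = ((0 : Fin n → ℝ), fun k => -dN fc j k p h) := by
  unfold DJf
  ext k
  · show ∑ m, dN fc m k p h * (ey j).1 m = 0
    simp [ey]
  · show -(∑ i, ((∑ m, dN fc m i p h * (ey j).1 m) * fc.N i k p
      + dely fc i p (ey j) * dN fc i k p h)) = -dN fc j k p h
    simp only [dely_ey]
    simp [ey, Pi.single_apply, ite_mul]

lemma DJf_ddx_right (h : Pt n) (i : Fin n) :
    DJf fc p h (ddx fc i p) =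
      (fun k => dN fc i k p h, fun k => -(∑ m, dN fc i m p h * fc.N m k p)) := by
  unfold DJf
  ext k
  · show ∑ m, dN fc m k p h * (ddx fc i p).1 m = _
    simp [ddx, Pi.single_apply, mul_ite]
  · show -(∑ m, ((∑ a, dN fc a m p h * (ddx fc i p).1 a) * fc.N m k p
      + dely fc m p (ddx fc i p) * dN fc m k p h)) = _
    simp only [dely_ddx]
    simp [ddx, Pi.single_apply, mul_ite]

lemma Jm_vert (c : Fin n → ℝ) :
    Jm fc p ((0 : Fin n → ℝ), c) = (c, fun k => -(∑ m, c m * fc.N m k p)) := by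
  ext k
  · show dely fc k p ((0 : Fin n → ℝ), c) = c k
    simp [dely]
  · show -(∑ m, dely fc m p ((0 : Fin n → ℝ), c) * fc.N m k p) - _ = _
    simp [dely]

lemma Jm_horiz (c : Fin n → ℝ) :
    Jm fc p (c, fun k => -(∑ m, c m * fc.N m k p)) = ((0 : Fin n → ℝ), fun k => -c k) := by
  have hd : ∀ a : Fin n, dely fc a p (c, fun k => -(∑ m, c m * fc.N m k p)) = 0 := by
    intro a
    unfold dely
    show -(∑ m, c m * fc.N m a p) + ∑ j, fc.N j a p * c j = 0
    rw [sum_mul_comm]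
    ring
  ext k
  · show dely fc k p _ = 0
    exact hd k
  · show -(∑ m, dely fc m p _ * fc.N m k p) - c k = -c k
    simp only [hd]
    simp

lemma sum_smul_ey (c : Fin n → ℝ) :
    ∑ k, c k • (ey k : Pt n) = ((0 : Fin n → ℝ), c) := by
  ext m
  · rw [Prod.fst_sum]
    simp [ey]
  · rw [Prod.snd_sum]
    show (∑ k, c k • (Pi.single k 1 : Fin n → ℝ)) m = c m
    rw [Finset.sum_apply]
    simp [Pi.single_apply, mul_ite]

lemma sum_smul_ddx (c : Fin n → ℝ) :
    ∑ k, c k • ddx fc k p = (c, fun m => -(∑ k, c k * fc.N k m p)) := by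
  ext m
  · rw [Prod.fst_sum]
    show (∑ k, c k • (Pi.single k 1 : Fin n → ℝ)) m = c m
    rw [Finset.sum_apply]
    simp [Pi.single_apply, mul_ite]
  · rw [Prod.snd_sum]
    show (∑ k, c k • fun j => -fc.N k j p) m = _
    rw [Finset.sum_apply]
    simp [mul_comm]

end Helpers2

section Helpers3

variable {n : ℕ} (fc : Chart n) {p : Pt n}

lemma dN_neg (j k : Fin n) (h : Pt n) : dN fc j k p (-h) = -dN fc j k p h := by
  simp [dN]

lemma Rc_eq (i j k : Fin n) :
    Rc fc i j k p = dN fc i k p (ddx fc j p) - dN fc j k p (ddx fc i p) := rfl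

lemma Bfun_dd (hsym : ∀ a b c : Fin n, dN fc b c p (ey a) = dN fc a c p (ey b))
    (i j : Fin n) :
    Bfun fc p (ddx fc i p) (ddx fc j p) = -(∑ k, Rc fc i j k p • (ey k : Pt n)) := by
  rw [sum_smul_ey]
  unfold Bfun
  rw [Jm_ddx, Jm_ddx, DJf_ddx_right, DJf_ddx_right, DJf_ddx_right, DJf_ddx_right,
    Jm_horiz, Jm_horiz]
  ext k
  · show dN fc j k p (-(ey i)) - dN fc i k p (-(ey j))
      + (0:Fin n → ℝ) k - (0:Fin n → ℝ) k = -((0:Fin n → ℝ) k)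
    simp [dN_neg, hsym j i k]
  · show -(∑ m, dN fc j m p (-(ey i)) * fc.N m k p)
      - (-(∑ m, dN fc i m p (-(ey j)) * fc.N m k p))
      + -(dN fc i k p (ddx fc j p))
      - (-(dN fc j k p (ddx fc i p)))
      = -(Rc fc i j k p)
    simp only [dN_neg, Rc_eq]
    rw [Finset.sum_congr rfl (fun m _ => by rw [hsym i j m])]
    ring

end Helpers3

section Helpers3b

variable {n : ℕ} (fc : Chart n) {p : Pt n}

lemma Bfun_ee (hsym : ∀ a b c : Fin n, dN fc b c p (ey a) = dN fc a c p (ey b))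
    (i j : Fin n) :
    Bfun fc p (ey i) (ey j) = ∑ k, Rc fc i j k p • (ey k : Pt n) := by
  rw [sum_smul_ey]
  unfold Bfun
  rw [Jm_ey, Jm_ey, DJf_ey_right, DJf_ey_right, DJf_ey_right, DJf_ey_right,
    Jm_vert, Jm_vert]
  ext k
  · show (0:Fin n → ℝ) k - (0:Fin n → ℝ) k
      + -(dN fc i k p (ey j)) - (-(dN fc j k p (ey i))) = (0:Fin n → ℝ) k
    simp [hsym j i k]
  · show -(dN fc j k p (ddx fc i p)) - (-(dN fc i k p (ddx fc j p)))
      + -(∑ m, -(dN fc i m p (ey j)) * fc.N m k p)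
      - (-(∑ m, -(dN fc j m p (ey i)) * fc.N m k p)) = Rc fc i j k p
    have e1 : (∑ m, -(dN fc i m p (ey j)) * fc.N m k p)
        = ∑ m, -(dN fc j m p (ey i)) * fc.N m k p :=
      Finset.sum_congr rfl fun m _ => by rw [hsym i j m]
    rw [e1, Rc_eq]
    ring

lemma Bfun_de (hsym : ∀ a b c : Fin n, dN fc b c p (ey a) = dN fc a c p (ey b))
    (i j : Fin n) :
    Bfun fc p (ddx fc i p) (ey j) = -(∑ k, Rc fc i j k p • ddx fc k p) := by
  rw [sum_smul_ddx]
  unfold Bfun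
  rw [Jm_ddx, Jm_ey, DJf_ey_right, DJf_ddx_right, DJf_ddx_right, DJf_ey_right,
    Jm_horiz, Jm_vert]
  ext k
  · show (0:Fin n → ℝ) k - dN fc i k p (ddx fc j p)
      + (0:Fin n → ℝ) k - (-(dN fc j k p (ddx fc i p))) = -(Rc fc i j k p)
    simp [Rc_eq]
    ring
  · show -(dN fc j k p (-(ey i)))
      - (-(∑ m, dN fc i m p (ddx fc j p) * fc.N m k p))
      + -(dN fc i k p (ey j))
      - (-(∑ m, -(dN fc j m p (ddx fc i p)) * fc.N m k p))
      = -(-(∑ m, Rc fc i j m p * fc.N m k p))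
    simp only [dN_neg, Rc_eq, neg_neg, neg_mul, Finset.sum_neg_distrib, sub_mul,
      Finset.sum_sub_distrib, hsym j i k]
    ring

end Helpers3b

section Helpers4

variable {n : ℕ} (fc : Chart n) {p : Pt n} {X Y : VF n}

lemma diffN (hp : p ∈ fc.U) (i j : Fin n) : DifferentiableAt ℝ (fc.N i j) p :=
  ((fc.Nsmooth i j).contDiffAt (fc.hUopen.mem_nhds hp)).differentiableAt
    (by simp)

lemma fderiv_comp_apply (hX : DifferentiableAt ℝ X p) (a : Pt n) :
    fderiv ℝ X p a = (fun j => fderiv ℝ (fun q => (X q).1 j) p a,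
                      fun j => fderiv ℝ (fun q => (X q).2 j) p a) := by
  have h1 : fderiv ℝ X p =
      (fderiv ℝ (fun q => (X q).1) p).prod (fderiv ℝ (fun q => (X q).2) p) :=
    hX.fst.fderiv_prodMk hX.snd
  have h2 : fderiv ℝ (fun q => (X q).1) p =
      ContinuousLinearMap.pi (fun j => fderiv ℝ (fun q => (X q).1 j) p) :=
    fderiv_pi (fun j => differentiableAt_pi.1 hX.fst j)
  have h3 : fderiv ℝ (fun q => (X q).2) p =
      ContinuousLinearMap.pi (fun j => fderiv ℝ (fun q => (X q).2 j) p) :=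
    fderiv_pi (fun j => differentiableAt_pi.1 hX.snd j)
  rw [h1, h2, h3]
  rfl

lemma dC1 (hp : p ∈ fc.U) (hX : DifferentiableAt ℝ X p) (k : Fin n) :
    DifferentiableAt ℝ (fun q => dely fc k q (X q)) p ∧
    ∀ a : Pt n, fderiv ℝ (fun q => dely fc k q (X q)) p a
      = (fderiv ℝ X p a).2 k
        + ∑ j, (dN fc j k p a * (X p).1 j + fc.N j k p * (fderiv ℝ X p a).1 j) := by
  have hX1 : ∀ j, DifferentiableAt ℝ (fun q => (X q).1 j) p :=
    fun j => differentiableAt_pi.1 hX.fst j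
  have hX2 : ∀ j, DifferentiableAt ℝ (fun q => (X q).2 j) p :=
    fun j => differentiableAt_pi.1 hX.snd j
  have hprod : ∀ j : Fin n, DifferentiableAt ℝ (fun q => fc.N j k q * (X q).1 j) p :=
    fun j => (diffN fc hp j k).mul (hX1 j)
  have hsum : DifferentiableAt ℝ (fun q => ∑ j, fc.N j k q * (X q).1 j) p :=
    DifferentiableAt.fun_sum (fun j _ => hprod j)
  constructor
  · exact (hX2 k).add hsum
  · intro a
    have hb1 : ∀ j, (fderiv ℝ X p a).1 j = fderiv ℝ (fun q => (X q).1 j) p a :=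
      fun j => by rw [fderiv_comp_apply hX a]
    have hb2 : ∀ j, (fderiv ℝ X p a).2 j = fderiv ℝ (fun q => (X q).2 j) p a :=
      fun j => by rw [fderiv_comp_apply hX a]
    show fderiv ℝ (fun q => (X q).2 k + ∑ j, fc.N j k q * (X q).1 j) p a = _
    rw [fderiv_fun_add (hX2 k) hsum, fderiv_fun_sum (fun j _ => hprod j)]
    simp only [ContinuousLinearMap.add_apply, ContinuousLinearMap.coe_sum',
      Finset.sum_apply, hb1, hb2]
    congr 1
    refine Finset.sum_congr rfl fun j _ => ?_
    rw [fderiv_fun_mul (diffN fc hp j k) (hX1 j)]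
    simp only [ContinuousLinearMap.add_apply, ContinuousLinearMap.coe_smul',
      Pi.smul_apply, smul_eq_mul]
    show fc.N j k p * fderiv ℝ (fun q => (X q).1 j) p a + (X p).1 j * dN fc j k p a = _
    ring

lemma dC2 (hp : p ∈ fc.U) (hX : DifferentiableAt ℝ X p) (k : Fin n) :
    DifferentiableAt ℝ (fun q => -(∑ i, dely fc i q (X q) * fc.N i k q) - (X q).1 k) p ∧
    ∀ a : Pt n, fderiv ℝ (fun q => -(∑ i, dely fc i q (X q) * fc.N i k q) - (X q).1 k) p a
      = -(∑ i, ((fderiv ℝ (fun q => dely fc i q (X q)) p a) * fc.N i k p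
            + dely fc i p (X p) * dN fc i k p a))
        - (fderiv ℝ X p a).1 k := by
  have hX1 : ∀ j, DifferentiableAt ℝ (fun q => (X q).1 j) p :=
    fun j => differentiableAt_pi.1 hX.fst j
  have hterm : ∀ i : Fin n,
      DifferentiableAt ℝ (fun q => dely fc i q (X q) * fc.N i k q) p :=
    fun i => ((dC1 fc hp hX i).1).mul (diffN fc hp i k)
  have hsum : DifferentiableAt ℝ (fun q => ∑ i, dely fc i q (X q) * fc.N i k q) p :=
    DifferentiableAt.fun_sum (fun i _ => hterm i)
  constructor
  · exact hsum.neg.sub (hX1 k)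
  · intro a
    have hb1 : ∀ j, (fderiv ℝ X p a).1 j = fderiv ℝ (fun q => (X q).1 j) p a :=
      fun j => by rw [fderiv_comp_apply hX a]
    rw [fderiv_fun_sub hsum.fun_neg (hX1 k), fderiv_fun_neg, fderiv_fun_sum (fun i _ => hterm i)]
    simp only [hb1]
    simp only [ContinuousLinearMap.sub_apply, ContinuousLinearMap.neg_apply,
      ContinuousLinearMap.coe_sum', Finset.sum_apply]
    congr 2
    refine Finset.sum_congr rfl fun i _ => ?_
    rw [fderiv_fun_mul ((dC1 fc hp hX i).1) (diffN fc hp i k)]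
    simp only [ContinuousLinearMap.add_apply, ContinuousLinearMap.coe_smul',
      Pi.smul_apply, smul_eq_mul]
    show dely fc i p (X p) * dN fc i k p a + fc.N i k p * _ = _
    ring

lemma Jvf_diff (hp : p ∈ fc.U) (hX : DifferentiableAt ℝ X p) :
    DifferentiableAt ℝ (Jvf fc X) p := by
  have h1 : DifferentiableAt ℝ (fun q => (fun k => dely fc k q (X q) : Fin n → ℝ)) p :=
    differentiableAt_pi'' (fun k => (dC1 fc hp hX k).1)
  have h2 : DifferentiableAt ℝ
      (fun q => (fun k => -(∑ i, dely fc i q (X q) * fc.N i k q) - (X q).1 k : Fin n → ℝ)) p :=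
    differentiableAt_pi'' (fun k => (dC2 fc hp hX k).1)
  exact h1.prodMk h2

lemma Jvf_fderiv (hp : p ∈ fc.U) (hX : DifferentiableAt ℝ X p) (a : Pt n) :
    fderiv ℝ (Jvf fc X) p a = DJf fc p a (X p) + Jm fc p (fderiv ℝ X p a) := by
  rw [fderiv_comp_apply (Jvf_diff fc hp hX) a]
  have e1 : ∀ k, (fun q => (Jvf fc X q).1 k) = fun q => dely fc k q (X q) := fun k => rfl
  have e2 : ∀ k, (fun q => (Jvf fc X q).2 k)
      = fun q => -(∑ i, dely fc i q (X q) * fc.N i k q) - (X q).1 k := fun k => rfl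
  ext k
  · show fderiv ℝ (fun q => (Jvf fc X q).1 k) p a = _
    rw [e1 k, (dC1 fc hp hX k).2 a]
    show _ = (∑ j, dN fc j k p a * (X p).1 j) + dely fc k p (fderiv ℝ X p a)
    unfold dely
    rw [Finset.sum_add_distrib]
    ring
  · show fderiv ℝ (fun q => (Jvf fc X q).2 k) p a = _
    rw [e2 k, (dC2 fc hp hX k).2 a]
    show _ = -(∑ i, ((∑ j, dN fc j i p a * (X p).1 j) * fc.N i k p
        + dely fc i p (X p) * dN fc i k p a))
      + (-(∑ i, dely fc i p (fderiv ℝ X p a) * fc.N i k p) - (fderiv ℝ X p a).1 k)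
    have e3 : ∀ i : Fin n, fderiv ℝ (fun q => dely fc i q (X q)) p a
        = (∑ j, dN fc j i p a * (X p).1 j) + dely fc i p (fderiv ℝ X p a) := by
      intro i
      rw [(dC1 fc hp hX i).2 a]
      unfold dely
      rw [Finset.sum_add_distrib]
      ring
    simp only [e3, add_mul, Finset.sum_add_distrib]
    ring

lemma Jvf_apply : Jvf fc X p = Jm fc p (X p) := rfl

lemma NijJ_eq (hp : p ∈ fc.U) (hX : DifferentiableAt ℝ X p)
    (hY : DifferentiableAt ℝ Y p) :
    NijJ fc X Y p = Bfun fc p (X p) (Y p) := by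
  unfold NijJ lie
  rw [Jvf_fderiv fc hp hY (Jvf fc X p), Jvf_fderiv fc hp hX (Jvf fc Y p),
    Jvf_fderiv fc hp hX (Y p), Jvf_fderiv fc hp hY (X p)]
  simp only [Jvf_apply]
  unfold Bfun
  simp only [Jm_sub, Jm_add, Jm_JJ]
  abel

end Helpers4

section Helpers5

open Topology Filter Matrix

variable {n : ℕ} (fc : Chart n) {p : Pt n}

lemma pd_smoothOn {f : Pt n → ℝ} (hf : ContDiffOn ℝ (⊤ : ℕ∞) f fc.U) (v : Pt n) :
    ContDiffOn ℝ (⊤ : ℕ∞) (pd v f) fc.U := by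
  have h := hf.fderiv_of_isOpen fc.hUopen (m := (⊤ : ℕ∞)) (by exact_mod_cast le_top)
  exact h.clm_apply contDiffOn_const

lemma contDiffOn_finprod {ι : Type*} (s : Finset ι) (f : ι → Pt n → ℝ)
    (h : ∀ i ∈ s, ContDiffOn ℝ (⊤ : ℕ∞) (f i) fc.U) :
    ContDiffOn ℝ (⊤ : ℕ∞) (fun q => ∏ i ∈ s, f i q) fc.U := by
  classical
  induction s using Finset.induction with
  | empty => simpa using contDiffOn_const
  | @insert a s ha ih =>
    have : (fun q => ∏ i ∈ insert a s, f i q) = fun q => f a q * ∏ i ∈ s, f i q := by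
      funext q; rw [Finset.prod_insert ha]
    rw [this]
    exact (h a (Finset.mem_insert_self a s)).mul
      (ih fun i hi => h i (Finset.mem_insert_of_mem hi))

/-- the fundamental tensor as a matrix-valued map -/
def gmat (fc : Chart n) (q : Pt n) : Matrix (Fin n) (Fin n) ℝ :=
  Matrix.of fun a b => fc.g a b q

lemma gmat_posdef (hp : p ∈ fc.U) : (gmat fc p).PosDef := by
  refine Matrix.PosDef.of_dotProduct_mulVec_pos ?_ ?_
  · show (gmat fc p)ᴴ = gmat fc p
    ext a b
    show star (gmat fc p b a) = gmat fc p a b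
    rw [star_trivial]
    exact fc.gsymm b a p hp
  · intro x hx
    have h := fc.gposdef p hp x hx
    have hx' : star x = x := by funext a; exact star_trivial _
    have e : dotProduct (star x) ((gmat fc p) *ᵥ x) = ∑ a, ∑ b, fc.g a b p * x a * x b := by
      rw [hx']
      show ∑ a, x a * ∑ b, fc.g a b p * x b = _
      simp only [Finset.mul_sum]
      exact Finset.sum_congr rfl fun a _ => Finset.sum_congr rfl fun b _ => by ring
    rw [e]; exact h

lemma det_smoothOn : ContDiffOn ℝ (⊤ : ℕ∞) (fun q => (gmat fc q).det) fc.U := by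
  have : (fun q => (gmat fc q).det)
      = fun q => ∑ σ : Equiv.Perm (Fin n), (Equiv.Perm.sign σ : ℝ) * ∏ i, gmat fc q (σ i) i := by
    funext q; rw [Matrix.det_apply']
  rw [this]
  exact ContDiffOn.sum fun σ _ => contDiffOn_const.mul
    (contDiffOn_finprod fc _ _ fun i _ => fc.gsmooth (σ i) i)

lemma adj_smoothOn (i j : Fin n) :
    ContDiffOn ℝ (⊤ : ℕ∞) (fun q => (gmat fc q).adjugate i j) fc.U := by
  have : (fun q => (gmat fc q).adjugate i j)
      = fun q => ∑ σ : Equiv.Perm (Fin n), (Equiv.Perm.sign σ : ℝ)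
          * ∏ a, ((gmat fc q).updateRow j (Pi.single i 1)) (σ a) a := by
    funext q; rw [Matrix.adjugate_apply, Matrix.det_apply']
  rw [this]
  refine ContDiffOn.sum fun σ _ => contDiffOn_const.mul (contDiffOn_finprod fc _ _ fun a _ => ?_)
  by_cases h : σ a = j
  · simp only [Matrix.updateRow_apply, h, if_true]
    exact contDiffOn_const
  · simp only [Matrix.updateRow_apply, h, if_false]
    exact fc.gsmooth (σ a) a

lemma ginv_eq (hp : p ∈ fc.U) (i j : Fin n) :
    fc.ginv i j p = (gmat fc p)⁻¹ i j := by
  have h1 : gmat fc p * Matrix.of (fun a b => fc.ginv a b p) = 1 := by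
    ext a b
    rw [Matrix.mul_apply]
    simpa [gmat, Matrix.one_apply] using fc.hginv a b p hp
  rw [Matrix.inv_eq_right_inv h1]
  rfl

lemma ginv_smoothOn (i j : Fin n) : ContDiffOn ℝ (⊤ : ℕ∞) (fc.ginv i j) fc.U := by
  have hdet : ∀ q ∈ fc.U, (gmat fc q).det ≠ 0 :=
    fun q hq => ((gmat_posdef fc hq).det_pos).ne'
  have hsm : ContDiffOn ℝ (⊤ : ℕ∞)
      (fun q => ((gmat fc q).det)⁻¹ * (gmat fc q).adjugate i j) fc.U :=
    ((det_smoothOn fc).inv hdet).mul (adj_smoothOn fc i j)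
  refine hsm.congr fun q hq => ?_
  rw [ginv_eq fc hq, Matrix.inv_def]
  simp [Ring.inverse_eq_inv', Matrix.smul_apply, smul_eq_mul]

lemma coord2_smoothOn (m : Fin n) : ContDiffOn ℝ (⊤ : ℕ∞) (fun q : Pt n => q.2 m) fc.U :=
  ((contDiff_pi.1 contDiff_snd m)).contDiffOn

lemma spray_smoothOn (k : Fin n) : ContDiffOn ℝ (⊤ : ℕ∞) (fc.spray k) fc.U := by
  have hF2 : ContDiffOn ℝ (⊤ : ℕ∞) (fun q => fc.F q ^ 2) fc.U := fc.Fsmooth.pow 2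
  have hsm : ContDiffOn ℝ (⊤ : ℕ∞) (fun q => (1/4 : ℝ) * ∑ j, fc.ginv k j q *
      ((∑ m, pd (ey j) (pd (ex m) (fun r => fc.F r ^ 2)) q * q.2 m)
        - pd (ex j) (fun r => fc.F r ^ 2) q)) fc.U := by
    refine contDiffOn_const.mul (ContDiffOn.sum fun j _ => (ginv_smoothOn fc k j).mul
      (ContDiffOn.sub (ContDiffOn.sum fun m _ => ?_) (pd_smoothOn fc hF2 (ex j))))
    exact (pd_smoothOn fc (pd_smoothOn fc hF2 (ex m)) (ey j)).mul (coord2_smoothOn fc m)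
  exact hsm.congr fun q hq => fc.spraydef k q hq

lemma N_symm (hp : p ∈ fc.U) (i j k : Fin n) :
    dN fc j k p (ey i) = dN fc i k p (ey j) := by
  set f := fc.spray k with hf
  have hfs : ContDiffOn ℝ (⊤ : ℕ∞) f fc.U := spray_smoothOn fc k
  have hUnhds : fc.U ∈ 𝓝 p := fc.hUopen.mem_nhds hp
  have hev : ∀ᶠ q in 𝓝 p, HasFDerivAt f (fderiv ℝ f q) q := by
    filter_upwards [fc.hUopen.eventually_mem hp] with q hq
    exact ((hfs.contDiffAt (fc.hUopen.mem_nhds hq)).differentiableAt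
      (by simp)).hasFDerivAt
  have hf'd : DifferentiableAt ℝ (fderiv ℝ f) p :=
    (((hfs.fderiv_of_isOpen fc.hUopen (m := (⊤:ℕ∞)) (by exact_mod_cast le_top)).contDiffAt
      hUnhds).differentiableAt (by simp))
  have key := second_derivative_symmetric_of_eventually_of_real hev hf'd.hasFDerivAt
    (ey i) (ey j)
  have hNpd : ∀ a : Fin n, fderiv ℝ (fc.N a k) p = fderiv ℝ (pd (ey a) f) p := by
    intro a
    apply Filter.EventuallyEq.fderiv_eq
    filter_upwards [fc.hUopen.eventually_mem hp] with q hq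
    exact fc.Ndef a k q hq
  have hpdf : ∀ a b : Fin n,
      fderiv ℝ (pd (ey a) f) p (ey b) = fderiv ℝ (fderiv ℝ f) p (ey b) (ey a) := by
    intro a b
    have h0 : pd (ey a) f = fun q => (fderiv ℝ f q) ((fun _ : Pt n => ey a) q) := rfl
    rw [h0, fderiv_clm_apply hf'd (differentiableAt_const _)]
    simp [fderiv_const]
  show fderiv ℝ (fc.N j k) p (ey i) = fderiv ℝ (fc.N i k) p (ey j)
  rw [hNpd j, hNpd i, hpdf j i, hpdf i j]
  exact key

end Helpers5

section Helpers6

variable {n : ℕ} (fc : Chart n) {p : Pt n}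

lemma dN_add (j k : Fin n) (h h' : Pt n) :
    dN fc j k p (h + h') = dN fc j k p h + dN fc j k p h' := map_add _ _ _

lemma dN_smul (j k : Fin n) (c : ℝ) (h : Pt n) :
    dN fc j k p (c • h) = c * dN fc j k p h := by
  unfold dN; rw [map_smul, smul_eq_mul]

lemma DJf_add_h (h h' u : Pt n) :
    DJf fc p (h + h') u = DJf fc p h u + DJf fc p h' u := by
  ext k
  · show ∑ j, dN fc j k p (h + h') * u.1 j
      = (∑ j, dN fc j k p h * u.1 j) + ∑ j, dN fc j k p h' * u.1 j
    simp [dN_add, add_mul, Finset.sum_add_distrib]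
  · show -(∑ i, ((∑ j, dN fc j i p (h + h') * u.1 j) * fc.N i k p
        + dely fc i p u * dN fc i k p (h + h')))
      = -(∑ i, ((∑ j, dN fc j i p h * u.1 j) * fc.N i k p + dely fc i p u * dN fc i k p h))
        + -(∑ i, ((∑ j, dN fc j i p h' * u.1 j) * fc.N i k p + dely fc i p u * dN fc i k p h'))
    simp [dN_add, add_mul, mul_add, Finset.sum_add_distrib]
    ring

lemma DJf_smul_h (c : ℝ) (h u : Pt n) :
    DJf fc p (c • h) u = c • DJf fc p h u := by
  have e : ∀ i : Fin n, (∑ j, c * dN fc j i p h * u.1 j)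
      = c * ∑ j, dN fc j i p h * u.1 j := fun i => by
    rw [Finset.mul_sum]; exact Finset.sum_congr rfl fun j _ => by ring
  ext k
  · show ∑ j, dN fc j k p (c • h) * u.1 j = c * ∑ j, dN fc j k p h * u.1 j
    simp only [dN_smul]
    exact e k
  · show -(∑ i, ((∑ j, dN fc j i p (c • h) * u.1 j) * fc.N i k p
        + dely fc i p u * dN fc i k p (c • h)))
      = c * -(∑ i, ((∑ j, dN fc j i p h * u.1 j) * fc.N i k p
        + dely fc i p u * dN fc i k p h))
    simp only [dN_smul, e, mul_neg, Finset.mul_sum]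
    refine congrArg Neg.neg (Finset.sum_congr rfl fun i _ => by rw [← Finset.mul_sum]; ring)

lemma DJf_add_u (h u u' : Pt n) :
    DJf fc p h (u + u') = DJf fc p h u + DJf fc p h u' := by
  have e1 : (u + u').1 = u.1 + u'.1 := rfl
  ext k
  · show ∑ j, dN fc j k p h * (u + u').1 j
      = (∑ j, dN fc j k p h * u.1 j) + ∑ j, dN fc j k p h * u'.1 j
    simp [e1, mul_add, Finset.sum_add_distrib]
  · show -(∑ i, ((∑ j, dN fc j i p h * (u + u').1 j) * fc.N i k p
        + dely fc i p (u + u') * dN fc i k p h))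
      = -(∑ i, ((∑ j, dN fc j i p h * u.1 j) * fc.N i k p + dely fc i p u * dN fc i k p h))
        + -(∑ i, ((∑ j, dN fc j i p h * u'.1 j) * fc.N i k p + dely fc i p u' * dN fc i k p h))
    simp [e1, dely_add, mul_add, add_mul, Finset.sum_add_distrib]
    ring

lemma DJf_smul_u (c : ℝ) (h u : Pt n) :
    DJf fc p h (c • u) = c • DJf fc p h u := by
  have e1 : (c • u).1 = c • u.1 := rfl
  have e : ∀ i : Fin n, (∑ j, dN fc j i p h * (c • u).1 j)
      = c * ∑ j, dN fc j i p h * u.1 j := fun i => by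
    rw [Finset.mul_sum]
    exact Finset.sum_congr rfl fun j _ => by
      show dN fc j i p h * (c * u.1 j) = _
      ring
  ext k
  · show ∑ j, dN fc j k p h * (c • u).1 j = c * ∑ j, dN fc j k p h * u.1 j
    exact e k
  · show -(∑ i, ((∑ j, dN fc j i p h * (c • u).1 j) * fc.N i k p
        + dely fc i p (c • u) * dN fc i k p h))
      = c * -(∑ i, ((∑ j, dN fc j i p h * u.1 j) * fc.N i k p
        + dely fc i p u * dN fc i k p h))
    simp only [e, dely_smul, mul_neg, Finset.mul_sum]
    refine congrArg Neg.neg (Finset.sum_congr rfl fun i _ => by rw [← Finset.mul_sum]; ring)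

lemma Bfun_add_left (v v' w : Pt n) :
    Bfun fc p (v + v') w = Bfun fc p v w + Bfun fc p v' w := by
  unfold Bfun
  rw [Jm_add, DJf_add_h, DJf_add_u, DJf_add_u, DJf_add_h, Jm_add, Jm_add]
  abel

lemma Bfun_smul_left (c : ℝ) (v w : Pt n) :
    Bfun fc p (c • v) w = c • Bfun fc p v w := by
  unfold Bfun
  rw [Jm_smul, DJf_smul_h, DJf_smul_u, DJf_smul_u, DJf_smul_h, Jm_smul, Jm_smul]
  module

lemma Bfun_add_right (v w w' : Pt n) :
    Bfun fc p v (w + w') = Bfun fc p v w + Bfun fc p v w' := by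
  rw [Bfun_skew, Bfun_add_left, Bfun_skew fc w v, Bfun_skew fc w' v]
  abel

lemma Bfun_smul_right (c : ℝ) (v w : Pt n) :
    Bfun fc p v (c • w) = c • Bfun fc p v w := by
  rw [Bfun_skew, Bfun_smul_left, Bfun_skew fc w v]
  module

/-- `Bfun` as a linear map in its first vector argument. -/
def BL (fc : Chart n) (p w : Pt n) : Pt n →ₗ[ℝ] Pt n where
  toFun v := Bfun fc p v w
  map_add' a b := Bfun_add_left fc a b w
  map_smul' c a := Bfun_smul_left fc c a w

/-- `Bfun` as a linear map in its second vector argument. -/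
def BR (fc : Chart n) (p v : Pt n) : Pt n →ₗ[ℝ] Pt n where
  toFun w := Bfun fc p v w
  map_add' := Bfun_add_right fc v
  map_smul' c a := Bfun_smul_right fc c v a

lemma decomp (v : Pt n) :
    (∑ m, v.1 m • ddx fc m p) + ∑ m, dely fc m p v • (ey m : Pt n) = v := by
  rw [sum_smul_ddx, sum_smul_ey]
  ext k
  · show v.1 k + (0 : Fin n → ℝ) k = v.1 k
    simp
  · show -(∑ m, v.1 m * fc.N m k p) + dely fc k p v = v.2 k
    unfold dely
    rw [show (∑ j, fc.N j k p * v.1 j) = ∑ j, v.1 j * fc.N j k p from sum_mul_comm _ _]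
    ring

end Helpers6

section Helpers7

variable {n : ℕ} (fc : Chart n) {p : Pt n}

lemma diff_ddx (hp : p ∈ fc.U) (i : Fin n) : DifferentiableAt ℝ (ddx fc i) p := by
  have h1 : DifferentiableAt ℝ (fun _ : Pt n => (Pi.single i 1 : Fin n → ℝ)) p :=
    differentiableAt_const _
  have h2 : DifferentiableAt ℝ (fun q => (fun j => -(fc.N i j q) : Fin n → ℝ)) p :=
    differentiableAt_pi'' fun j => (diffN fc hp i j).neg
  exact h1.prodMk h2

lemma diff_dyv (i : Fin n) : DifferentiableAt ℝ (dyv i : VF n) p :=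
  differentiableAt_const _

lemma smooth_ddx (i : Fin n) : ContDiffOn ℝ (⊤ : ℕ∞) (ddx fc i) fc.U :=
  ContDiffOn.prodMk contDiffOn_const
    (contDiffOn_pi.2 fun j => (fc.Nsmooth i j).neg)

lemma part1 (i j : Fin n) (hp : p ∈ fc.U) :
    (NijJ fc (ddx fc i) (ddx fc j) p = -(∑ k, Rc fc i j k p • (ey k : Pt n))) ∧
    (NijJ fc (dyv i) (dyv j) p = ∑ k, Rc fc i j k p • (ey k : Pt n)) ∧
    (NijJ fc (ddx fc i) (dyv j) p = -(∑ k, Rc fc i j k p • ddx fc k p)) := by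
  have hsym : ∀ a b c : Fin n, dN fc b c p (ey a) = dN fc a c p (ey b) :=
    fun a b c => N_symm fc hp a b c
  refine ⟨?_, ?_, ?_⟩
  · rw [NijJ_eq fc hp (diff_ddx fc hp i) (diff_ddx fc hp j)]
    exact Bfun_dd fc hsym i j
  · rw [NijJ_eq fc hp (diff_dyv i) (diff_dyv j)]
    exact Bfun_ee fc hsym i j
  · rw [NijJ_eq fc hp (diff_ddx fc hp i) (diff_dyv j)]
    exact Bfun_de fc hsym i j

end Helpers7

/-- On the tangent bundle `TM` of a Finsler manifold, the
Nijenhuis tensor `N_J` of the natural almost complex structure `J` satisfies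
`N_J(δ/δx^i, δ/δx^j) = −N_J(∂/∂y^i, ∂/∂y^j) = −R^k_{ij} ∂/∂y^k` and
`N_J(δ/δx^i, ∂/∂y^j) = −R^k_{ij} δ/δx^k`, where
`R^k_{ij} = δG_i^k/δx^j − δG_j^k/δx^i`; consequently `J` is integrable
(`N_J ≡ 0`) if and only if the curvature of the nonlinear connection
vanishes, i.e. `M` is flat. -/
theorem nijenhuis_tensor_of_J {n : ℕ} (fc : Chart n) :
    (∀ i j : Fin n, ∀ p ∈ fc.U,
      (NijJ fc (ddx fc i) (ddx fc j) p = -(∑ k, Rc fc i j k p • (ey k : Pt n))) ∧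
      (NijJ fc (dyv i) (dyv j) p = ∑ k, Rc fc i j k p • (ey k : Pt n)) ∧
      (NijJ fc (ddx fc i) (dyv j) p = -(∑ k, Rc fc i j k p • ddx fc k p))) ∧
    ((∀ X Y : VF n, ContDiffOn ℝ (⊤ : ℕ∞) X fc.U →
        ContDiffOn ℝ (⊤ : ℕ∞) Y fc.U →
        ∀ p ∈ fc.U, NijJ fc X Y p = 0)
      ↔ (∀ i j k : Fin n, ∀ p ∈ fc.U, Rc fc i j k p = 0)) := by
  constructor
  · exact fun i j p hp => part1 fc i j hp
  · constructor
    · intro hNij i j k p hp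
      have h0 := hNij (ddx fc i) (ddx fc j) (smooth_ddx fc i) (smooth_ddx fc j) p hp
      have h1 := (part1 fc i j hp).1
      rw [h0] at h1
      have h2 : (∑ m, Rc fc i j m p • (ey m : Pt n)) = 0 := neg_eq_zero.1 h1.symm
      rw [sum_smul_ey] at h2
      have h3 := congrFun (congrArg Prod.snd h2) k
      simpa using h3
    · intro hR X Y hXs hYs p hp
      have dX : DifferentiableAt ℝ X p :=
        (hXs.contDiffAt (fc.hUopen.mem_nhds hp)).differentiableAt (by simp)
      have dY : DifferentiableAt ℝ Y p :=
        (hYs.contDiffAt (fc.hUopen.mem_nhds hp)).differentiableAt (by simp)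
      have hsym : ∀ a b c : Fin n, dN fc b c p (ey a) = dN fc a c p (ey b) :=
        fun a b c => N_symm fc hp a b c
      have hRz : ∀ a b c, Rc fc a b c p = 0 := fun a b c => hR a b c p hp
      have hdd : ∀ a b, Bfun fc p (ddx fc a p) (ddx fc b p) = 0 := fun a b => by
        rw [Bfun_dd fc hsym a b]; simp [hRz]
      have hee : ∀ a b, Bfun fc p (ey a) (ey b) = 0 := fun a b => by
        rw [Bfun_ee fc hsym a b]; simp [hRz]
      have hde : ∀ a b, Bfun fc p (ddx fc a p) (ey b) = 0 := fun a b => by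
        rw [Bfun_de fc hsym a b]; simp [hRz]
      have hed : ∀ a b, Bfun fc p (ey a) (ddx fc b p) = 0 := fun a b => by
        rw [Bfun_skew, hde b a]; simp
      have h1 : ∀ m, Bfun fc p (ddx fc m p) (Y p) = 0 := by
        intro m
        have e : Bfun fc p (ddx fc m p) (Y p) = BR fc p (ddx fc m p)
            ((∑ a, (Y p).1 a • ddx fc a p) + ∑ a, dely fc a p (Y p) • (ey a : Pt n)) := by
          rw [decomp]; rfl
        rw [e, map_add, map_sum, map_sum]
        simp only [map_smul]
        simp [BR, hdd m, hde m]
      have h2 : ∀ m, Bfun fc p (ey m) (Y p) = 0 := by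
        intro m
        have e : Bfun fc p (ey m) (Y p) = BR fc p (ey m)
            ((∑ a, (Y p).1 a • ddx fc a p) + ∑ a, dely fc a p (Y p) • (ey a : Pt n)) := by
          rw [decomp]; rfl
        rw [e, map_add, map_sum, map_sum]
        simp only [map_smul]
        simp [BR, hed m, hee m]
      rw [NijJ_eq fc hp dX dY]
      have e : Bfun fc p (X p) (Y p) = BL fc p (Y p)
          ((∑ m, (X p).1 m • ddx fc m p) + ∑ m, dely fc m p (X p) • (ey m : Pt n)) := by
        rw [decomp]; rfl
      rw [e, map_add, map_sum, map_sum]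
      simp only [map_smul]
      simp [BL, h1, h2]

end FinslerFoliations

end
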